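/- Let z_1,...,z_n be i.i.d. random elements of a measurable space Z, let k ≤ n, and let κ : Z^k → ℝ be a (not necessarily symmetric) kernel with E[|κ(z_1,...,z_k)|] < ∞. Let U(z_1,...,z_n) = (1/(n(n−1)⋯(n−k+1))) Σ κ(z_{i_1},...,z_{i_k}), the sum ranging over all ordered k-tuples of distinct indices from {1,...,n}, and let κ̄(z_1,...,z_n) = (1/⌊n/k⌋) Σ_{i=1}^{⌊n/k⌋} κ(z_{k(i−1)+1},...,z_{ki}) be the block average over the first ⌊n/k⌋·k data points. Then for every t ∈ ℝ, E[exp(t·U)] ≤ E[exp(t·κ̄)]. -/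

import Mathlib

set_option autoImplicit false

open MeasureTheory ProbabilityTheory Real
open scoped ENNReal

section Aux

variable {n k : ℕ}

/-- Any embedding can be carried to any other embedding by a permutation. -/
lemma exists_perm_comp_aux (b e : Fin k ↪ Fin n) :
    ∃ σ : Equiv.Perm (Fin n), ∀ j, σ (b j) = e j := by
  classical
  let E : {x // x ∈ Set.range b} ≃ {x // x ∈ Set.range e} :=
    (Equiv.ofInjective b b.injective).symm.trans (Equiv.ofInjective e e.injective)
  refine ⟨E.extendSubtype, fun j => ?_⟩
  have hx : (b j : Fin n) ∈ Set.range b := ⟨j, rfl⟩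
  rw [E.extendSubtype_apply_of_mem (b j) hx]
  show ((Equiv.ofInjective e e.injective)
      ((Equiv.ofInjective b b.injective).symm ⟨b j, ⟨j, rfl⟩⟩) : Fin n) = e j
  rw [Equiv.ofInjective_symm_apply b.injective j]
  rfl

/-- Summing a function of `σ ∘ b` over all permutations `σ` is, up to counting factors,
the sum over all embeddings. -/
lemma sum_perm_comp_aux (hkn : k ≤ n) (b : Fin k ↪ Fin n) (F : (Fin k ↪ Fin n) → ℝ) :
    (n.descFactorial k : ℝ) * ∑ σ : Equiv.Perm (Fin n), F (b.trans σ.toEmbedding) =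
      (n.factorial : ℝ) * ∑ e : Fin k ↪ Fin n, F e := by
  classical
  set Φ : Equiv.Perm (Fin n) → (Fin k ↪ Fin n) := fun σ => b.trans σ.toEmbedding with hΦ
  -- all fibers of Φ have the same cardinality
  have hfib : ∀ e : Fin k ↪ Fin n,
      (Finset.univ.filter fun σ => Φ σ = e).card
        = (Finset.univ.filter fun σ => Φ σ = b).card := by
    intro e
    obtain ⟨σ₀, hσ₀⟩ := exists_perm_comp_aux b e
    refine Finset.card_nbij' (fun σ => σ₀⁻¹ * σ) (fun τ => σ₀ * τ) ?_ ?_ ?_ ?_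
    · intro σ hσ
      simp only [Finset.mem_coe, Finset.mem_filter, Finset.mem_univ, true_and] at hσ ⊢
      ext j
      have : σ (b j) = e j := by
        have := congrArg (fun g : Fin k ↪ Fin n => g j) hσ
        simpa [Φ] using this
      simp [Φ, Equiv.Perm.mul_apply, this, ← hσ₀ j]
    · intro τ hτ
      simp only [Finset.mem_coe, Finset.mem_filter, Finset.mem_univ, true_and] at hτ ⊢
      ext j
      have : τ (b j) = b j := by
        have := congrArg (fun g : Fin k ↪ Fin n => g j) hτ
        simpa [Φ] using this
      simp [Φ, Equiv.Perm.mul_apply, this, hσ₀ j]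
    · intro σ _; simp [mul_assoc]
    · intro τ _; simp [mul_assoc]
  set c : ℕ := (Finset.univ.filter fun σ => Φ σ = b).card with hc
  -- total count
  have htot : (n.descFactorial k) * c = n.factorial := by
    have h1 : (Finset.univ : Finset (Equiv.Perm (Fin n))).card
        = ∑ e : Fin k ↪ Fin n, (Finset.univ.filter fun σ => Φ σ = e).card :=
      Finset.card_eq_sum_card_fiberwise fun σ _ => Finset.mem_univ (Φ σ)
    have h2 : (Finset.univ : Finset (Equiv.Perm (Fin n))).card = n.factorial := by
      rw [Finset.card_univ, Fintype.card_perm, Fintype.card_fin]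
    have h3 : ∑ e : Fin k ↪ Fin n, (Finset.univ.filter fun σ => Φ σ = e).card
        = (Fintype.card (Fin k ↪ Fin n)) * c := by
      rw [Finset.sum_congr rfl fun e _ => hfib e, Finset.sum_const, Finset.card_univ,
        smul_eq_mul]
    have h4 : Fintype.card (Fin k ↪ Fin n) = n.descFactorial k := by
      rw [Fintype.card_embedding_eq, Fintype.card_fin, Fintype.card_fin]
    rw [h1, h3, h4] at h2
    exact h2
  -- fiberwise sum
  have hsum : ∑ σ : Equiv.Perm (Fin n), F (Φ σ) = (c : ℝ) * ∑ e : Fin k ↪ Fin n, F e := by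
    rw [← Finset.sum_fiberwise_of_maps_to (g := Φ) (t := (Finset.univ : Finset (Fin k ↪ Fin n)))
        (fun σ _ => Finset.mem_univ (Φ σ)) (fun σ => F (Φ σ))]
    rw [Finset.mul_sum]
    refine Finset.sum_congr rfl fun e _ => ?_
    have : ∀ σ ∈ Finset.univ.filter fun σ => Φ σ = e, F (Φ σ) = F e := by
      intro σ hσ
      simp only [Finset.mem_filter] at hσ
      rw [hσ.2]
    rw [Finset.sum_congr rfl this, Finset.sum_const, hfib e, nsmul_eq_mul]
  rw [show (∑ σ : Equiv.Perm (Fin n), F (b.trans σ.toEmbedding))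
      = ∑ σ : Equiv.Perm (Fin n), F (Φ σ) from rfl, hsum, ← mul_assoc, ← Nat.cast_mul, htot]

/-- The product measure is invariant under permutation of coordinates. -/
lemma pi_map_perm_aux {Z : Type*} [MeasurableSpace Z] (ν : Measure Z) [IsProbabilityMeasure ν]
    (σ : Equiv.Perm (Fin n)) :
    Measure.map (fun x : Fin n → Z => fun i => x (σ i)) (Measure.pi fun _ : Fin n => ν)
      = Measure.pi fun _ : Fin n => ν := by
  refine (Measure.pi_eq fun s hs => ?_).symm
  rw [Measure.map_apply
    (measurable_pi_lambda (fun x : Fin n → Z => fun i => x (σ i))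
      (fun i => measurable_pi_apply (σ i)))
    (MeasurableSet.univ_pi hs)]
  have hpre : (fun x : Fin n → Z => fun i => x (σ i)) ⁻¹' Set.pi Set.univ s
      = Set.pi Set.univ fun j => s (σ.symm j) := by
    ext x
    simp only [Set.mem_preimage, Set.mem_pi, Set.mem_univ, forall_true_left, true_implies]
    constructor
    · intro h j
      have := h (σ.symm j)
      simpa using this
    · intro h i
      have := h (σ i)
      simpa using this
  rw [hpre, Measure.pi_pi]
  exact Equiv.prod_comp σ.symm fun i => ν (s i)

/-- The joint law of finitely many i.i.d. random variables is the product measure. -/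
lemma map_iid_aux {Ω Z : Type*} [MeasurableSpace Ω] [MeasurableSpace Z]
    (μ : Measure Ω) [IsProbabilityMeasure μ] (ν : Measure Z) [IsProbabilityMeasure ν]
    (z : ℕ → Ω → Z) (hzm : ∀ i, Measurable (z i))
    (hindep : iIndepFun z μ)
    (hid : ∀ i, Measure.map (z i) μ = ν) (n : ℕ) :
    Measure.map (fun ω => fun i : Fin n => z i ω) μ = Measure.pi fun _ : Fin n => ν := by
  classical
  refine (Measure.pi_eq fun s hs => ?_).symm
  rw [Measure.map_apply
    (measurable_pi_lambda (fun ω => fun i : Fin n => z (i : ℕ) ω) (fun i => hzm (i : ℕ)))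
    (MeasurableSet.univ_pi hs)]
  set sets : ℕ → Set Z := fun j => if h : j < n then s ⟨j, h⟩ else Set.univ with hsets
  have hpre : (fun ω => fun i : Fin n => z (i : ℕ) ω) ⁻¹' Set.pi Set.univ s
      = ⋂ j ∈ Finset.range n, z j ⁻¹' sets j := by
    ext ω
    simp only [Set.mem_preimage, Set.mem_pi, Set.mem_univ, true_implies, Set.mem_iInter,
      Finset.mem_range, Set.mem_preimage]
    constructor
    · intro h j hj
      simp only [sets, dif_pos hj]
      exact h ⟨j, hj⟩
    · intro h i
      have := h i i.isLt
      simpa only [sets, dif_pos i.isLt] using this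
  rw [hpre, hindep.measure_inter_preimage_eq_mul (Finset.range n)
    (fun j hj => by
      simp only [Finset.mem_range] at hj
      simpa only [sets, dif_pos hj] using hs ⟨j, hj⟩)]
  have heach : ∀ j ∈ Finset.range n, μ (z j ⁻¹' sets j) = ν (sets j) := by
    intro j hj
    simp only [Finset.mem_range] at hj
    rw [← hid j, Measure.map_apply (hzm j)]
    simpa only [sets, dif_pos hj] using hs ⟨j, hj⟩
  rw [Finset.prod_congr rfl heach, ← Fin.prod_univ_eq_prod_range (fun j => ν (sets j)) n]
  refine Finset.prod_congr rfl fun i _ => ?_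
  congr 1
  simp only [sets, dif_pos i.isLt]

end Aux

/-- **MGF dominance of U-statistics (Hoeffding).**
For i.i.d. data `z 0, z 1, ...` with common law `ν`, a kernel `κ` of order `k ≤ n` with
`E|κ| < ∞`, the moment generating function of the U-statistic
`U = (n(n-1)⋯(n-k+1))⁻¹ Σ_{(i₁,…,i_k) distinct} κ(z_{i₁},…,z_{i_k})`
is dominated by that of the block average
`κ̄ = ⌊n/k⌋⁻¹ Σ_{i=1}^{⌊n/k⌋} κ(z_{k(i-1)+1},…,z_{ki})`:
for every `t ∈ ℝ`, `E[exp(t U)] ≤ E[exp(t κ̄)]`. -/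
theorem mgf_dominance_of_U_statistic
    {Ω Z : Type*} [MeasurableSpace Ω] [MeasurableSpace Z]
    (μ : Measure Ω) [IsProbabilityMeasure μ]
    (ν : Measure Z) [IsProbabilityMeasure ν]
    (z : ℕ → Ω → Z) (hzm : ∀ i, Measurable (z i))
    (hindep : iIndepFun z μ)
    (hid : ∀ i, Measure.map (z i) μ = ν)
    (n k : ℕ) (hk : 0 < k) (hkn : k ≤ n)
    (κ : (Fin k → Z) → ℝ) (hκm : Measurable κ)
    (hint : Integrable κ (Measure.pi fun _ : Fin k => ν))
    (t : ℝ) :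
    ∫⁻ ω, ENNReal.ofReal (Real.exp (t *
        (((n.descFactorial k : ℝ))⁻¹ *
          ∑ e : Fin k ↪ Fin n, κ (fun i => z (e i) ω)))) ∂μ
      ≤ ∫⁻ ω, ENNReal.ofReal (Real.exp (t *
        ((((n / k : ℕ) : ℝ))⁻¹ *
          ∑ i ∈ Finset.range (n / k), κ (fun j => z (k * i + j) ω)))) ∂μ := by
  classical
  set m := n / k with hmdef
  have hm1 : 1 ≤ m := (Nat.one_le_div_iff hk).2 hkn
  have hmk : m * k ≤ n := Nat.div_mul_le_self n k
  have hblt : ∀ (i : Fin m) (j : Fin k), k * (i : ℕ) + (j : ℕ) < n := by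
    intro i j
    have h1 : k * ((i : ℕ) + 1) ≤ k * m := Nat.mul_le_mul_left k i.isLt
    have h2 : k * m ≤ n := by rw [mul_comm]; exact hmk
    have h3 : k * ((i : ℕ) + 1) = k * (i : ℕ) + k := by ring
    omega
  set b : Fin m → (Fin k ↪ Fin n) := fun i =>
    ⟨fun j => ⟨k * (i : ℕ) + (j : ℕ), hblt i j⟩, by
      intro j₁ j₂ h
      have : k * (i : ℕ) + (j₁ : ℕ) = k * (i : ℕ) + (j₂ : ℕ) := congrArg Fin.val h
      exact Fin.ext (by omega)⟩ with hbdef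
  set B : (Fin n → Z) → ℝ :=
    fun x => (m : ℝ)⁻¹ * ∑ i : Fin m, κ (fun j => x (b i j)) with hBdef
  have hBm : Measurable B := by
    apply Measurable.const_mul
    exact Finset.measurable_sum _ fun i _ =>
      hκm.comp (measurable_pi_lambda _ fun j => measurable_pi_apply _)
  have hdesc : (n.descFactorial k : ℝ) ≠ 0 := by
    rw [Nat.cast_ne_zero]
    simp only [ne_eq, Nat.descFactorial_eq_zero_iff_lt]
    omega
  have hfact : ((n.factorial : ℝ)) ≠ 0 := Nat.cast_ne_zero.2 (Nat.factorial_ne_zero n)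
  have hmne : (m : ℝ) ≠ 0 := Nat.cast_ne_zero.2 (by omega)
  -- key combinatorial identity
  have key : ∀ x : Fin n → Z,
      ((n.descFactorial k : ℝ))⁻¹ * ∑ e : Fin k ↪ Fin n, κ (fun j => x (e j)) =
      ((n.factorial : ℝ))⁻¹ * ∑ σ : Equiv.Perm (Fin n), B (fun i => x (σ i)) := by
    intro x
    set S : ℝ := ∑ e : Fin k ↪ Fin n, κ (fun j => x (e j)) with hSdef
    set A : Fin m → ℝ := fun i => ∑ σ : Equiv.Perm (Fin n), κ (fun j => x (σ (b i j)))
      with hAdef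
    have hS : ∀ i : Fin m, (n.descFactorial k : ℝ) * A i = (n.factorial : ℝ) * S := by
      intro i
      have := sum_perm_comp_aux hkn (b i) (fun e => κ (fun j => x (e j)))
      simpa [hAdef, Function.Embedding.trans_apply, Equiv.coe_toEmbedding] using this
    have hA : ∀ i : Fin m, A i = (n.factorial : ℝ) * S / (n.descFactorial k : ℝ) := by
      intro i
      rw [eq_div_iff hdesc]
      have := hS i
      linarith
    have hsum : ∑ σ : Equiv.Perm (Fin n), B (fun i => x (σ i))
        = (m : ℝ)⁻¹ * ∑ i : Fin m, A i := by
      simp only [hBdef]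
      rw [← Finset.mul_sum]
      congr 1
      rw [Finset.sum_comm]
    rw [hsum, Finset.sum_congr rfl fun i _ => hA i, Finset.sum_const, Finset.card_univ,
      Fintype.card_fin, nsmul_eq_mul]
    field_simp
  -- Jensen's inequality pointwise
  have jensen : ∀ x : Fin n → Z,
      Real.exp (t * (((n.factorial : ℝ))⁻¹ * ∑ σ : Equiv.Perm (Fin n), B (fun i => x (σ i))))
        ≤ ∑ σ : Equiv.Perm (Fin n),
            (n.factorial : ℝ)⁻¹ * Real.exp (t * B (fun i => x (σ i))) := by
    intro x
    have hw : ∑ _σ : Equiv.Perm (Fin n), ((n.factorial : ℝ))⁻¹ = 1 := by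
      rw [Finset.sum_const, Finset.card_univ, Fintype.card_perm, Fintype.card_fin,
        nsmul_eq_mul, mul_inv_cancel₀ hfact]
    have h := convexOn_exp.map_sum_le
      (w := fun _ : Equiv.Perm (Fin n) => ((n.factorial : ℝ))⁻¹)
      (p := fun σ => t * B (fun i => x (σ i)))
      (fun _ _ => by positivity) hw (fun _ _ => Set.mem_univ _)
    have harg : t * (((n.factorial : ℝ))⁻¹ * ∑ σ : Equiv.Perm (Fin n), B (fun i => x (σ i)))
        = ∑ σ : Equiv.Perm (Fin n),
            ((n.factorial : ℝ))⁻¹ • (t * B (fun i => x (σ i))) := by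
      simp only [smul_eq_mul]
      rw [Finset.mul_sum, Finset.mul_sum]
      exact Finset.sum_congr rfl fun σ _ => by ring
    rw [harg]
    simpa [smul_eq_mul] using h
  -- push to the product measure
  set pm : Measure (Fin n → Z) := Measure.pi fun _ : Fin n => ν with hpmdef
  set X : Ω → (Fin n → Z) := fun ω => fun i : Fin n => z i ω with hXdef
  have hXm : Measurable X := measurable_pi_lambda _ fun i => hzm i
  have hmap : Measure.map X μ = pm := map_iid_aux μ ν z hzm hindep hid n
  set g₁ : (Fin n → Z) → ℝ≥0∞ := fun x => ENNReal.ofReal (Real.exp (t *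
      (((n.descFactorial k : ℝ))⁻¹ * ∑ e : Fin k ↪ Fin n, κ (fun j => x (e j)))))
    with hg₁def
  have hg₁m : Measurable g₁ := by
    apply ENNReal.measurable_ofReal.comp
    apply Measurable.exp
    apply Measurable.const_mul
    apply Measurable.const_mul
    exact Finset.measurable_sum _ fun e _ =>
      hκm.comp (measurable_pi_lambda _ fun j => measurable_pi_apply _)
  set g₂ : (Fin n → Z) → ℝ≥0∞ := fun x => ENNReal.ofReal (Real.exp (t * B x)) with hg₂def
  have hg₂m : Measurable g₂ :=
    ENNReal.measurable_ofReal.comp ((hBm.const_mul t).exp)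
  have hpermM : ∀ σ : Equiv.Perm (Fin n),
      Measurable fun x : Fin n → Z => (fun i => x (σ i)) :=
    fun σ => measurable_pi_lambda _ fun i => measurable_pi_apply _
  -- the left-hand side as an integral over π
  have hLHS : ∫⁻ ω, ENNReal.ofReal (Real.exp (t *
        (((n.descFactorial k : ℝ))⁻¹ *
          ∑ e : Fin k ↪ Fin n, κ (fun i => z (e i) ω)))) ∂μ
      = ∫⁻ x, g₁ x ∂pm := by
    rw [← hmap, lintegral_map hg₁m hXm]
  -- the right-hand side as an integral over π
  have hRHS : ∫⁻ ω, ENNReal.ofReal (Real.exp (t *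
        ((((n / k : ℕ) : ℝ))⁻¹ *
          ∑ i ∈ Finset.range (n / k), κ (fun j => z (k * i + j) ω)))) ∂μ
      = ∫⁻ x, g₂ x ∂pm := by
    rw [← hmap, lintegral_map hg₂m hXm]
    refine lintegral_congr fun ω => ?_
    have hsum : ∑ i ∈ Finset.range m, κ (fun j => z (k * i + (j : ℕ)) ω)
        = ∑ i : Fin m, κ (fun j => X ω (b i j)) := by
      rw [← Fin.sum_univ_eq_sum_range (fun i => κ fun j => z (k * i + (j : ℕ)) ω) m]
      rfl
    show ENNReal.ofReal (Real.exp (t * ((m : ℝ)⁻¹ *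
        ∑ i ∈ Finset.range m, κ (fun j => z (k * i + (j : ℕ)) ω))))
      = ENNReal.ofReal (Real.exp (t * ((m : ℝ)⁻¹ *
        ∑ i : Fin m, κ (fun j => X ω (b i j)))))
    rw [hsum]
  rw [hLHS, hRHS]
  -- main chain of (in)equalities
  set J : ℝ≥0∞ := ∫⁻ x, g₂ x ∂pm with hJdef
  have hstep1 : ∫⁻ x, g₁ x ∂pm ≤ ∫⁻ x, ∑ σ : Equiv.Perm (Fin n),
      ENNReal.ofReal ((n.factorial : ℝ)⁻¹ * Real.exp (t * B (fun i => x (σ i)))) ∂pm := by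
    refine lintegral_mono fun x => ?_
    rw [hg₁def]
    simp only
    rw [key x]
    calc ENNReal.ofReal (Real.exp (t * (((n.factorial : ℝ))⁻¹ *
            ∑ σ : Equiv.Perm (Fin n), B (fun i => x (σ i)))))
        ≤ ENNReal.ofReal (∑ σ : Equiv.Perm (Fin n),
            (n.factorial : ℝ)⁻¹ * Real.exp (t * B (fun i => x (σ i)))) :=
          ENNReal.ofReal_le_ofReal (jensen x)
      _ = ∑ σ : Equiv.Perm (Fin n),
            ENNReal.ofReal ((n.factorial : ℝ)⁻¹ * Real.exp (t * B (fun i => x (σ i)))) :=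
          ENNReal.ofReal_sum_of_nonneg fun σ _ => by positivity
  have hmeas_term : ∀ σ : Equiv.Perm (Fin n),
      Measurable fun x : Fin n → Z =>
        ENNReal.ofReal ((n.factorial : ℝ)⁻¹ * Real.exp (t * B (fun i => x (σ i)))) := by
    intro σ
    apply ENNReal.measurable_ofReal.comp
    exact (((hBm.comp (hpermM σ)).const_mul t).exp).const_mul _
  have hstep2 : ∫⁻ x, ∑ σ : Equiv.Perm (Fin n),
      ENNReal.ofReal ((n.factorial : ℝ)⁻¹ * Real.exp (t * B (fun i => x (σ i)))) ∂pm
      = ∑ σ : Equiv.Perm (Fin n), ∫⁻ x,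
          ENNReal.ofReal ((n.factorial : ℝ)⁻¹ * Real.exp (t * B (fun i => x (σ i)))) ∂pm :=
    lintegral_finset_sum _ fun σ _ => hmeas_term σ
  have hstep3 : ∀ σ : Equiv.Perm (Fin n),
      ∫⁻ x, ENNReal.ofReal ((n.factorial : ℝ)⁻¹ * Real.exp (t * B (fun i => x (σ i)))) ∂pm
        = ENNReal.ofReal ((n.factorial : ℝ)⁻¹) * J := by
    intro σ
    calc ∫⁻ x, ENNReal.ofReal ((n.factorial : ℝ)⁻¹ * Real.exp (t * B (fun i => x (σ i)))) ∂pm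
        = ∫⁻ x, ENNReal.ofReal ((n.factorial : ℝ)⁻¹) * g₂ (fun i => x (σ i)) ∂pm := by
          refine lintegral_congr fun x => ?_
          rw [ENNReal.ofReal_mul (by positivity)]
      _ = ENNReal.ofReal ((n.factorial : ℝ)⁻¹) * ∫⁻ x, g₂ (fun i => x (σ i)) ∂pm :=
          lintegral_const_mul' _ _ ENNReal.ofReal_ne_top
      _ = ENNReal.ofReal ((n.factorial : ℝ)⁻¹) * J := by
          congr 1
          have h2 : ∫⁻ x, g₂ (fun i => x (σ i)) ∂pm
              = ∫⁻ x, g₂ x ∂(Measure.map (fun x : Fin n → Z => fun i => x (σ i)) pm) :=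
            (lintegral_map hg₂m (hpermM σ)).symm
          rw [h2, hpmdef, pi_map_perm_aux ν σ, hJdef]
  calc ∫⁻ x, g₁ x ∂pm
      ≤ ∫⁻ x, ∑ σ : Equiv.Perm (Fin n),
          ENNReal.ofReal ((n.factorial : ℝ)⁻¹ * Real.exp (t * B (fun i => x (σ i)))) ∂pm :=
        hstep1
    _ = ∑ σ : Equiv.Perm (Fin n), ∫⁻ x,
          ENNReal.ofReal ((n.factorial : ℝ)⁻¹ * Real.exp (t * B (fun i => x (σ i)))) ∂pm :=
        hstep2
    _ = ∑ _σ : Equiv.Perm (Fin n), ENNReal.ofReal ((n.factorial : ℝ)⁻¹) * J :=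
        Finset.sum_congr rfl fun σ _ => hstep3 σ
    _ = J := by
        rw [Finset.sum_const, Finset.card_univ, Fintype.card_perm, Fintype.card_fin]
        rw [ENNReal.ofReal_inv_of_pos (by positivity), ENNReal.ofReal_natCast]
        rw [nsmul_eq_mul, ← mul_assoc, ENNReal.mul_inv_cancel (by
            exact_mod_cast Nat.factorial_ne_zero n) (ENNReal.natCast_ne_top _), one_mul]
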